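/- Every transitive impartial game with activeness G^g satisfies 𝒢(G^g) = b(G^g), where b is the formal birthday (height), and moreover {b(G'^{g'}) : G'^{g'} ∈ G^g} = {0,1,...,b(G^g)−1}; consequently every transitive game is canonical. -/

import Mathlib

inductive AGame : Type where
  | mk : List AGame → Bool → AGame

namespace AGame

noncomputable instance : DecidableEq AGame := Classical.decEq _

def opts : AGame → List AGame | mk gs _ => gs
def act : AGame → Bool | mk _ g => g

theorem sizeOf_lt_of_mem {G G' : AGame} (h : G' ∈ G.opts) : sizeOf G' < sizeOf G := by
  cases G with
  | mk gs g =>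
    simp only [opts] at h
    have := List.sizeOf_lt_of_mem h
    simp [AGame.mk.sizeOf_spec]
    omega

/-- Disjunctive sum of games with activeness. -/
def add (G H : AGame) : AGame :=
  mk (G.opts.attach.map (fun x => add x.1 H) ++
      H.opts.attach.map (fun y => add G y.1)) (G.act || H.act)
termination_by sizeOf G + sizeOf H
decreasing_by
  · have := sizeOf_lt_of_mem x.2; omega
  · have := sizeOf_lt_of_mem y.2; omega

/-- `PPos G` means the outcome of `G` is 𝒫 (second player wins). -/
def PPos (G : AGame) : Prop :=
  G.act = false ∨ ∀ G' ∈ G.opts.attach, ¬ PPos G'.1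
termination_by sizeOf G
decreasing_by
  have := sizeOf_lt_of_mem G'.2; omega

/-- Hereditary set-equality (the paper's ≅). -/
def Identical (G H : AGame) : Prop :=
  G.act = H.act ∧ (∀ G' ∈ G.opts.attach, ∃ H' ∈ H.opts.attach, Identical G'.1 H'.1)
              ∧ (∀ H' ∈ H.opts.attach, ∃ G' ∈ G.opts.attach, Identical G'.1 H'.1)
termination_by sizeOf G + sizeOf H
decreasing_by
  · have := sizeOf_lt_of_mem G'.2; have := sizeOf_lt_of_mem H'.2; omega
  · have := sizeOf_lt_of_mem G'.2; have := sizeOf_lt_of_mem H'.2; omega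

/-- Equivalence of games with activeness: same outcome in every sum. -/
def Equiv (G H : AGame) : Prop := ∀ X : AGame, (PPos (add G X) ↔ PPos (add H X))

end AGame

namespace AGame

/-- Nimbers with activeness: `star γ n ≅ {star γ j : j < n}^{γ n}`. -/
def star (γ : ℕ → Bool) : ℕ → AGame
  | n => mk ((List.range n).attach.map (fun j => star γ j.1)) (γ n)
termination_by n => n
decreasing_by
  have := j.2; simp [List.mem_range] at this; omega

/-- The generalized Grundy set `𝒢^γ(G)`. -/
def GSet (γ : ℕ → Bool) (G : AGame) : Set ℕ := {n | PPos (add G (star γ n))}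

/-- Minimum excludant of a set of naturals. -/
noncomputable def mex (S : Set ℕ) : ℕ := sInf {n | n ∉ S}

/-- Ordinary Grundy value, computed ignoring activeness. -/
noncomputable def grundy (G : AGame) : ℕ :=
  mex {m | ∃ G' ∈ G.opts.attach, grundy G'.1 = m}
termination_by sizeOf G
decreasing_by
  have := sizeOf_lt_of_mem G'.2; omega

/-- The three types of games with activeness. -/
inductive AType : Type where
  | inactive : AType            -- type 0
  | activeSomeInactive : AType  -- type 1_{∃0}
  | activeAllActive : AType     -- type 1_{∀1}

open Classical in
/-- `type(G^g)`. -/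
noncomputable def typ (G : AGame) : AType :=
  if G.act = false then .inactive
  else if ∃ G' ∈ G.opts, G'.act = false then .activeSomeInactive
  else .activeAllActive

/-- Formal birthday `b(G)`. -/
def bday (G : AGame) : ℕ :=
  (G.opts.attach.map (fun G' => bday G'.1 + 1)).foldr max 0
termination_by sizeOf G
decreasing_by
  have := sizeOf_lt_of_mem G'.2; omega

/-- An option `G'` of `G` is reversible if it has an option equivalent to `G`. -/
def Reversible (G G' : AGame) : Prop := ∃ G'' ∈ G'.opts, Equiv G'' G

/-- A canonical game: all options canonical and no option reversible. -/
def Canonical (G : AGame) : Prop :=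
  (∀ G' ∈ G.opts.attach, Canonical G'.1) ∧ (∀ G' ∈ G.opts, ¬ Reversible G G')
termination_by sizeOf G
decreasing_by
  have := sizeOf_lt_of_mem G'.2; omega

/-- A transitive game: all options transitive and options of options are options. -/
def TransGame (G : AGame) : Prop :=
  (∀ G' ∈ G.opts.attach, TransGame G'.1) ∧ (∀ G' ∈ G.opts, ∀ G'' ∈ G'.opts, G'' ∈ G.opts)
termination_by sizeOf G
decreasing_by
  have := sizeOf_lt_of_mem G'.2; omega

/-- `G` is covered by `H` if every option of `G` is equivalent to some option of `H`. -/
def Covered (G H : AGame) : Prop := ∀ G' ∈ G.opts, ∃ H' ∈ H.opts, Equiv G' H'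

/-- The relation `G ⋈ H`. -/
def Bowtie (G H : AGame) : Prop :=
  (∀ G' ∈ G.opts, ¬ Equiv G' H) ∧ (∀ H' ∈ H.opts, ¬ Equiv G H')

/-- The linear chain `∅^{g₀ g₁ … gₙ}`. -/
def chain (g : ℕ → Bool) : ℕ → AGame
  | 0 => mk [] (g 0)
  | n + 1 => mk [chain g n] (g (n + 1))

end AGame
namespace AGame

lemma add_act (A B : AGame) : (add A B).act = (A.act || B.act) := by
  rw [add]; rfl

lemma mem_add_opts {A B C : AGame} :
    C ∈ (add A B).opts ↔ (∃ A' ∈ A.opts, C = add A' B) ∨ (∃ B' ∈ B.opts, C = add A B') := by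
  rw [add]
  simp [opts, List.mem_map, eq_comm]

lemma star_act (γ : ℕ → Bool) (n : ℕ) : (star γ n).act = γ n := by
  rw [star]; rfl

lemma mem_star_opts {γ : ℕ → Bool} {n : ℕ} {C : AGame} :
    C ∈ (star γ n).opts ↔ ∃ j < n, C = star γ j := by
  rw [star]
  simp [opts, List.mem_map, eq_comm]

lemma PPos_iff (G : AGame) : PPos G ↔ (G.act = false ∨ ∀ G' ∈ G.opts, ¬ PPos G') := by
  rw [PPos]; simp

lemma grundy_eq (G : AGame) : grundy G = mex {m | ∃ G' ∈ G.opts, grundy G' = m} := by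
  rw [grundy]; simp

lemma bday_eq (G : AGame) : bday G = (G.opts.map (fun G' => bday G' + 1)).foldr max 0 := by
  rw [bday]
  congr 1
  exact List.attach_map_val (l := G.opts) (f := fun G' => G'.bday + 1)

lemma transGame_iff (G : AGame) : TransGame G ↔
    (∀ G' ∈ G.opts, TransGame G') ∧ (∀ G' ∈ G.opts, ∀ G'' ∈ G'.opts, G'' ∈ G.opts) := by
  rw [TransGame]; simp

lemma canonical_iff (G : AGame) : Canonical G ↔
    (∀ G' ∈ G.opts, Canonical G') ∧ (∀ G' ∈ G.opts, ¬ Reversible G G') := by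
  rw [Canonical]; simp

lemma sizeOf_pos (A : AGame) : 0 < sizeOf A := by
  cases A with
  | mk gs g => rw [AGame.mk.sizeOf_spec]; omega

lemma le_foldr_max {l : List ℕ} {a : ℕ} (h : a ∈ l) : a ≤ l.foldr max 0 := by
  induction l with
  | nil => simp at h
  | cons b t ih =>
    simp only [List.foldr_cons]
    rcases List.mem_cons.1 h with rfl | h
    · exact le_max_left _ _
    · exact (ih h).trans (le_max_right _ _)

lemma foldr_max_mem (l : List ℕ) : l.foldr max 0 = 0 ∨ l.foldr max 0 ∈ l := by
  induction l with
  | nil => left; rfl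
  | cons b t ih =>
    simp only [List.foldr_cons]
    rcases max_cases b (t.foldr max 0) with ⟨h1, _⟩ | ⟨h1, _⟩
    · right; rw [h1]; exact List.mem_cons_self
    · rw [h1]
      rcases ih with h | h
      · left; exact h
      · right; exact List.mem_cons_of_mem _ h

lemma bday_lt {G G' : AGame} (h : G' ∈ G.opts) : bday G' < bday G := by
  have h1 : bday G' + 1 ∈ G.opts.map (fun G' => bday G' + 1) :=
    List.mem_map_of_mem h
  have := le_foldr_max h1
  rw [bday_eq G]; omega

lemma exists_bday_max {G : AGame} (h : G.opts ≠ []) : ∃ G' ∈ G.opts, bday G' + 1 = bday G := by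
  rcases foldr_max_mem (G.opts.map (fun G' => bday G' + 1)) with h0 | hm
  · obtain ⟨G', hG'⟩ := List.exists_mem_of_ne_nil _ h
    have h1 : bday G' + 1 ∈ G.opts.map (fun G' => bday G' + 1) :=
      List.mem_map_of_mem hG'
    have := le_foldr_max h1
    omega
  · rw [← bday_eq] at hm
    obtain ⟨G', hG', hb⟩ := List.mem_map.1 hm
    exact ⟨G', hG', hb⟩

lemma mex_Iio (b : ℕ) : mex (Set.Iio b) = b := by
  unfold mex
  have : {n | n ∉ Set.Iio b} = Set.Ici b := by
    ext n; simp [Set.mem_Iio, not_lt]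
  rw [this]
  exact csInf_Ici

lemma grundy_compl_nonempty (G : AGame) :
    ∃ n, n ∉ {m | ∃ G' ∈ G.opts, grundy G' = m} := by
  refine ⟨(G.opts.map grundy).foldr max 0 + 1, ?_⟩
  rintro ⟨G', hG', hg⟩
  have : grundy G' ∈ G.opts.map grundy := List.mem_map_of_mem hG'
  have := le_foldr_max this
  omega

lemma grundy_not_mem (G : AGame) :
    grundy G ∉ {m | ∃ G' ∈ G.opts, grundy G' = m} := by
  rw [grundy_eq]
  exact Nat.sInf_mem (grundy_compl_nonempty G)

lemma grundy_eq_iff (G : AGame) (n : ℕ) :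
    grundy G = n ↔ (n ∉ {m | ∃ G' ∈ G.opts, grundy G' = m}) ∧ n ≤ grundy G := by
  constructor
  · rintro rfl; exact ⟨grundy_not_mem G, le_rfl⟩
  · rintro ⟨hn, hle⟩
    have : grundy G ≤ n := by
      rw [grundy_eq]; exact Nat.sInf_le hn
    omega

lemma ppos_add_star_aux : ∀ N : ℕ, ∀ (A : AGame) (n : ℕ), sizeOf A + n ≤ N →
    (PPos (add A (star (fun _ => true) n)) ↔ grundy A = n) := by
  intro N
  induction N with
  | zero => intro A n hN; have := sizeOf_pos A; omega
  | succ N ih =>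
    intro A n hN
    set T : ℕ → Bool := fun _ => true with hT
    have hact : (add A (star T n)).act = true := by
      rw [add_act, star_act]; simp [hT]
    rw [PPos_iff, hact]
    have key : (∀ C ∈ (add A (star T n)).opts, ¬ PPos C) ↔
        ((∀ A' ∈ A.opts, ¬ PPos (add A' (star T n))) ∧
         (∀ j < n, ¬ PPos (add A (star T j)))) := by
      constructor
      · intro h
        refine ⟨fun A' hA' => h _ (mem_add_opts.2 (Or.inl ⟨A', hA', rfl⟩)),
          fun j hj => h _ (mem_add_opts.2 (Or.inr ⟨star T j, mem_star_opts.2 ⟨j, hj, rfl⟩, rfl⟩))⟩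
      · rintro ⟨h1, h2⟩ C hC
        rcases mem_add_opts.1 hC with ⟨A', hA', rfl⟩ | ⟨B', hB', rfl⟩
        · exact h1 A' hA'
        · rcases mem_star_opts.1 hB' with ⟨j, hj, rfl⟩
          exact h2 j hj
    have h1 : (∀ A' ∈ A.opts, ¬ PPos (add A' (star T n))) ↔
        (∀ A' ∈ A.opts, grundy A' ≠ n) := by
      refine forall₂_congr fun A' hA' => ?_
      have := sizeOf_lt_of_mem hA'
      rw [ih A' n (by omega)]
    have h2 : (∀ j < n, ¬ PPos (add A (star T j))) ↔ n ≤ grundy A := by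
      constructor
      · intro h
        by_contra hc
        push_neg at hc
        exact h _ hc ((ih A (grundy A) (by omega)).2 rfl)
      · intro h j hj hp
        have := (ih A j (by omega)).1 hp
        omega
    simp only [key, h1, h2]
    rw [grundy_eq_iff A n]
    constructor
    · rintro (h | ⟨ha, hb⟩)
      · simp at h
      · exact ⟨fun ⟨A', hA', hg⟩ => ha A' hA' hg, hb⟩
    · rintro ⟨ha, hb⟩
      exact Or.inr ⟨fun A' hA' hg => ha ⟨A', hA', hg⟩, hb⟩

lemma ppos_add_star (A : AGame) (n : ℕ) :
    PPos (add A (star (fun _ => true) n)) ↔ grundy A = n :=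
  ppos_add_star_aux (sizeOf A + n) A n le_rfl

lemma transitive_props_aux : ∀ N : ℕ, ∀ G : AGame, sizeOf G ≤ N → TransGame G →
    grundy G = bday G ∧
    (∀ k : ℕ, (∃ G' ∈ G.opts, bday G' = k) ↔ k < bday G) ∧
    Canonical G := by
  intro N
  induction N with
  | zero => intro G hN; have := sizeOf_pos G; omega
  | succ N ih =>
    intro G hN htr
    obtain ⟨htr1, htr2⟩ := (transGame_iff G).1 htr
    have ihopt : ∀ G' ∈ G.opts, grundy G' = bday G' ∧
        (∀ k : ℕ, (∃ G'' ∈ G'.opts, bday G'' = k) ↔ k < bday G') ∧ Canonical G' := by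
      intro G' hG'
      have := sizeOf_lt_of_mem hG'
      exact ih G' (by omega) (htr1 G' hG')
    have hrange : ∀ k : ℕ, (∃ G' ∈ G.opts, bday G' = k) ↔ k < bday G := by
      intro k
      constructor
      · rintro ⟨G', hG', rfl⟩; exact bday_lt hG'
      · intro hk
        have hne : G.opts ≠ [] := by
          intro he
          rw [bday_eq, he] at hk
          simp at hk
        obtain ⟨G₀, hG₀, hb⟩ := exists_bday_max hne
        by_cases hkb : k = bday G₀
        · exact ⟨G₀, hG₀, hkb.symm⟩
        · have hk' : k < bday G₀ := by omega
          obtain ⟨G'', hG'', hb''⟩ := ((ihopt G₀ hG₀).2.1 k).2 hk'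
          exact ⟨G'', htr2 G₀ hG₀ G'' hG'', hb''⟩
    have hgrundy : grundy G = bday G := by
      rw [grundy_eq]
      have hset : {m | ∃ G' ∈ G.opts, grundy G' = m} = Set.Iio (bday G) := by
        ext m
        simp only [Set.mem_setOf_eq, Set.mem_Iio]
        rw [← hrange m]
        constructor
        · rintro ⟨G', hG', hg⟩
          exact ⟨G', hG', by rw [← (ihopt G' hG').1]; exact hg⟩
        · rintro ⟨G', hG', hb⟩
          exact ⟨G', hG', by rw [(ihopt G' hG').1]; exact hb⟩
      rw [hset, mex_Iio]
    refine ⟨hgrundy, hrange, ?_⟩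
    rw [canonical_iff]
    refine ⟨fun G' hG' => (ihopt G' hG').2.2, ?_⟩
    rintro G' hG' ⟨G'', hG'', heq⟩
    have hGmem : G'' ∈ G.opts := htr2 G' hG' G'' hG''
    have hb : bday G'' < bday G := bday_lt hGmem
    have hg'' : grundy G'' = bday G'' := (ihopt G'' hGmem).1
    have hX := heq (star (fun _ => true) (grundy G))
    rw [ppos_add_star, ppos_add_star] at hX
    have : grundy G'' = grundy G := hX.2 rfl
    omega

end AGame
/-- Transitive games: `𝒢(G)=b(G)`, the options realize exactly the birthdays
`0,…,b(G)−1`, and every transitive game is canonical. -/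
theorem AGame.transitive_props (G : AGame) (h : AGame.TransGame G) :
    AGame.grundy G = AGame.bday G ∧
    (∀ k : ℕ, (∃ G' ∈ G.opts, AGame.bday G' = k) ↔ k < AGame.bday G) ∧
    AGame.Canonical G :=
  AGame.transitive_props_aux (sizeOf G) G le_rfl h
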